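/- arXiv:2401.07423 — 5 statements merged into one kernel-verified Lean document; each statement's English description precedes it below -/
import Mathlib

section
/- Existence of equilibrium market tightness: under the stated assumptions, θ̄ > 0 and there exists θ ∈ (0, θ̄) with 𝒯(θ) = 0. -/
/-- Existence of equilibrium market tightness: under the stated assumptions,
`θ̄ > 0` and there exists `θ ∈ (0, θ̄)` with `𝒯 θ = 0`. -/
theorem existence_of_equilibrium_tightness
    (r s φ c h ℓ y z τ β : ℝ) (q : ℝ → ℝ)
    (hr : 0 < r) (hs : s ∈ Set.Ioo (0 : ℝ) 1) (hφ : φ ∈ Set.Ioo (0 : ℝ) 1)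
    (hc : 0 < c) (hh : 0 ≤ h) (hℓ : 0 ≤ ℓ)
    (hβ : β = 1 / (1 + r))
    (θbar : ℝ)
    (hθbar : θbar = ((1 - φ) / (c * φ)) *
      (y - z - β * s * τ - β * (r + s) * h / (1 - φ) + β * ℓ))
    (T : ℝ → ℝ)
    (hT : ∀ x, T x = y - z - β * s * τ - β * (r + s) * h / (1 - φ) -
      (c / (1 - φ)) * ((r + s + φ * x * q x) / q x +
        (β * x * q x / c) * (φ * h - (1 - φ) * ℓ)))
    (hq_cont : ContinuousOn q (Set.Icc 0 θbar))
    (hq0 : q 0 = 1)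
    (hq_pos : ∀ x ∈ Set.Icc 0 θbar, 0 < q x)
    (hxq : ∀ x ∈ Set.Ioc 0 θbar, 0 < x * q x ∧ x * q x < 1)
    (h_init_vac : (1 - φ) * (y - z - β * s * τ) / (r + s) > c + β * h) :
    0 < θbar ∧ ∃ θ ∈ Set.Ioo 0 θbar, T θ = 0 := by
  obtain ⟨hs0, hs1⟩ := hs
  obtain ⟨hφ0, hφ1⟩ := hφ
  have hφ1' : 0 < 1 - φ := by linarith
  have hrs : 0 < r + s := by linarith
  have hβ0 : 0 < β := by rw [hβ]; positivity
  set A : ℝ := y - z - β * s * τ - β * (r + s) * h / (1 - φ) with hA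
  have hivc : (r + s) * (c + β * h) < (1 - φ) * (y - z - β * s * τ) := by
    have := (lt_div_iff₀ hrs).mp h_init_vac
    linarith
  have hAgt : c * (r + s) / (1 - φ) < A := by
    rw [hA, div_lt_iff₀ hφ1']
    have hd : β * (r + s) * h / (1 - φ) * (1 - φ) = β * (r + s) * h :=
      div_mul_cancel₀ _ hφ1'.ne'
    nlinarith [hivc, hd]
  have hApos : 0 < A := lt_trans (by positivity) hAgt
  have hθpos : 0 < θbar := by
    rw [hθbar]
    have h1 : 0 < A + β * ℓ := by positivity
    positivity
  have hkey : c * φ * θbar = (1 - φ) * (A + β * ℓ) := by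
    rw [hθbar]; field_simp
  -- T 0 > 0
  have hT0 : 0 < T 0 := by
    rw [hT, hq0]
    have he : (r + s + φ * 0 * 1) / 1 + β * 0 * 1 / c * (φ * h - (1 - φ) * ℓ)
        = r + s := by field_simp; ring
    rw [he]
    have h7 : c / (1 - φ) * (r + s) = c * (r + s) / (1 - φ) := by ring
    rw [h7]
    linarith
  -- T θbar < 0
  have hqb : 0 < q θbar := hq_pos θbar ⟨le_of_lt hθpos, le_refl _⟩
  obtain ⟨hxq1, hxq2⟩ := hxq θbar ⟨hθpos, le_refl _⟩
  have hTb : T θbar < 0 := by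
    rw [hT]
    rw [show (r + s + φ * θbar * q θbar) / q θbar = (r + s) / q θbar + φ * θbar by
      field_simp]
    have h1 : c / (1 - φ) * (φ * θbar) = A + β * ℓ := by
      rw [div_mul_eq_mul_div, div_eq_iff hφ1'.ne']
      linear_combination hkey
    have h4 : c / (1 - φ) * (β * θbar * q θbar / c * (φ * h - (1 - φ) * ℓ))
        = β * θbar * q θbar * (φ * h) / (1 - φ) - β * θbar * q θbar * ℓ := by
      field_simp
    have hsum : c / (1 - φ) * ((r + s) / q θbar + φ * θbar
        + β * θbar * q θbar / c * (φ * h - (1 - φ) * ℓ))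
        = c / (1 - φ) * ((r + s) / q θbar) + (A + β * ℓ)
          + (β * θbar * q θbar * (φ * h) / (1 - φ) - β * θbar * q θbar * ℓ) := by
      rw [mul_add, mul_add, h1, h4]
    rw [hsum]
    have h5 : 0 < c / (1 - φ) * ((r + s) / q θbar) := by positivity
    have h6 : 0 ≤ β * θbar * q θbar * (φ * h) / (1 - φ) := by positivity
    have h3 : β * θbar * q θbar * ℓ ≤ β * ℓ := by
      nlinarith [mul_nonneg (mul_nonneg hβ0.le hℓ)
        (by linarith : (0:ℝ) ≤ 1 - θbar * q θbar)]
    linarith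
  -- continuity of T on Icc 0 θbar
  have hTc : ContinuousOn T (Set.Icc 0 θbar) := by
    have hg : ContinuousOn (fun x => y - z - β * s * τ - β * (r + s) * h / (1 - φ) -
      (c / (1 - φ)) * ((r + s + φ * x * q x) / q x +
        (β * x * q x / c) * (φ * h - (1 - φ) * ℓ))) (Set.Icc 0 θbar) := by
      have hid : ContinuousOn (fun x : ℝ => φ * x) (Set.Icc 0 θbar) :=
        (continuous_const.mul continuous_id).continuousOn
      have hxqc : ContinuousOn (fun x : ℝ => φ * x * q x) (Set.Icc 0 θbar) :=
        hid.mul hq_cont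
      have hnum : ContinuousOn (fun x : ℝ => r + s + φ * x * q x) (Set.Icc 0 θbar) :=
        continuousOn_const.add hxqc
      have hdiv : ContinuousOn (fun x : ℝ => (r + s + φ * x * q x) / q x)
          (Set.Icc 0 θbar) := hnum.div hq_cont (fun x hx => (hq_pos x hx).ne')
      have hid2 : ContinuousOn (fun x : ℝ => β * x) (Set.Icc 0 θbar) :=
        (continuous_const.mul continuous_id).continuousOn
      have h2nd : ContinuousOn (fun x : ℝ =>
          (β * x * q x / c) * (φ * h - (1 - φ) * ℓ)) (Set.Icc 0 θbar) :=
        (((hid2.mul hq_cont).div_const c).mul continuousOn_const)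
      exact continuousOn_const.sub (continuousOn_const.mul (hdiv.add h2nd))
    exact hg.congr (fun x _ => hT x)
  refine ⟨hθpos, ?_⟩
  have hIVT := intermediate_value_Ioo' (le_of_lt hθpos) hTc
  have h0mem : (0 : ℝ) ∈ Set.Ioo (T θbar) (T 0) := ⟨hTb, hT0⟩
  obtain ⟨θ, hθmem, hθeq⟩ := hIVT h0mem
  exact ⟨θ, hθmem, hθeq⟩
end

section
/- The value of 𝒯 at θ̄ satisfies 𝒯(θ̄) = −c·(r+s)/((1−φ)·q(θ̄)) − (β/(1−φ))·θ̄·q(θ̄)·φ·h − β·ℓ·(1 − θ̄·q(θ̄)), and in particular 𝒯(θ̄) < 0. -/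
/-- The value of `𝒯` at `θ̄` satisfies
`𝒯 θ̄ = −c·(r+s)/((1−φ)·q(θ̄)) − (β/(1−φ))·θ̄·q(θ̄)·φ·h − β·ℓ·(1 − θ̄·q(θ̄))`,
and in particular `𝒯 θ̄ < 0`. -/
theorem T_at_thetabar
    (r s φ c h ℓ y z τ β : ℝ) (q : ℝ → ℝ)
    (hr : 0 < r) (hs : s ∈ Set.Ioo (0 : ℝ) 1) (hφ : φ ∈ Set.Ioo (0 : ℝ) 1)
    (hc : 0 < c) (hh : 0 ≤ h) (hℓ : 0 ≤ ℓ)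
    (hβ : β = 1 / (1 + r))
    (θbar : ℝ)
    (hθbar : θbar = ((1 - φ) / (c * φ)) *
      (y - z - β * s * τ - β * (r + s) * h / (1 - φ) + β * ℓ))
    (T : ℝ → ℝ)
    (hT : ∀ x, T x = y - z - β * s * τ - β * (r + s) * h / (1 - φ) -
      (c / (1 - φ)) * ((r + s + φ * x * q x) / q x +
        (β * x * q x / c) * (φ * h - (1 - φ) * ℓ)))
    (hq_pos : 0 < q θbar)
    (hxq_pos : 0 < θbar * q θbar) (hxq_lt : θbar * q θbar < 1) :
    T θbar = -(c * (r + s) / ((1 - φ) * q θbar))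
        - (β / (1 - φ)) * θbar * q θbar * φ * h
        - β * ℓ * (1 - θbar * q θbar) ∧
    T θbar < 0 := by
  obtain ⟨hφ0, hφ1⟩ := hφ
  have h1φ : (0:ℝ) < 1 - φ := by linarith
  have hA : y - z - β * s * τ - β * (r + s) * h / (1 - φ)
      = c * φ * θbar / (1 - φ) - β * ℓ := by
    rw [hθbar]; field_simp; ring
  have heq : T θbar = -(c * (r + s) / ((1 - φ) * q θbar))
        - (β / (1 - φ)) * θbar * q θbar * φ * h
        - β * ℓ * (1 - θbar * q θbar) := by
    rw [hT, hA]
    field_simp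
    ring
  refine ⟨heq, ?_⟩
  rw [heq]
  have hβ0 : 0 < β := by rw [hβ]; positivity
  have hθ : 0 < θbar := by nlinarith
  have hrs : 0 < r + s := by linarith [hs.1]
  have t1 : 0 < c * (r + s) / ((1 - φ) * q θbar) := by positivity
  have t2 : 0 ≤ (β / (1 - φ)) * θbar * q θbar * φ * h := by positivity
  have t3 : 0 ≤ β * ℓ * (1 - θbar * q θbar) := by
    have : 0 ≤ 1 - θbar * q θbar := by linarith
    positivity
  linarith
end

section
/- Uniqueness of equilibrium market tightness: if q is differentiable on (0, θ̄) with q(x) > 0 and q′(x) < 0 for all x ∈ (0, θ̄), and if c·φ + β·(q(x) + x·q′(x))·(φ·h − (1−φ)·ℓ) > 0 for all x ∈ (0, θ̄), then 𝒯 is strictly decreasing on (0, θ̄); hence there is at most one θ ∈ (0, θ̄) with 𝒯(θ) = 0. -/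
/-- Uniqueness of equilibrium market tightness: if `q` is differentiable on `(0, θ̄)` with
`q x > 0` and `q′ x < 0` there, and if
`c·φ + β·(q x + x·q′ x)·(φ·h − (1−φ)·ℓ) > 0` on `(0, θ̄)`, then `𝒯` is strictly decreasing
on `(0, θ̄)`; hence there is at most one `θ ∈ (0, θ̄)` with `𝒯 θ = 0`. -/
theorem uniqueness_of_equilibrium_tightness
    (r s φ c h ℓ y z τ β : ℝ) (q q' : ℝ → ℝ)
    (hr : 0 < r) (hs : s ∈ Set.Ioo (0 : ℝ) 1) (hφ : φ ∈ Set.Ioo (0 : ℝ) 1)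
    (hc : 0 < c) (hh : 0 ≤ h) (hℓ : 0 ≤ ℓ)
    (hβ : β = 1 / (1 + r))
    (θbar : ℝ)
    (hθbar : θbar = ((1 - φ) / (c * φ)) *
      (y - z - β * s * τ - β * (r + s) * h / (1 - φ) + β * ℓ))
    (hθbar_pos : 0 < θbar)
    (T : ℝ → ℝ)
    (hT : ∀ x, T x = y - z - β * s * τ - β * (r + s) * h / (1 - φ) -
      (c / (1 - φ)) * ((r + s + φ * x * q x) / q x +
        (β * x * q x / c) * (φ * h - (1 - φ) * ℓ)))
    (hq_deriv : ∀ x ∈ Set.Ioo 0 θbar, HasDerivAt q (q' x) x)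
    (hq_pos : ∀ x ∈ Set.Ioo 0 θbar, 0 < q x)
    (hq'_neg : ∀ x ∈ Set.Ioo 0 θbar, q' x < 0)
    (h_slope : ∀ x ∈ Set.Ioo 0 θbar,
      c * φ + β * (q x + x * q' x) * (φ * h - (1 - φ) * ℓ) > 0) :
    StrictAntiOn T (Set.Ioo 0 θbar) ∧
    ∀ θ₁ ∈ Set.Ioo 0 θbar, ∀ θ₂ ∈ Set.Ioo 0 θbar, T θ₁ = 0 → T θ₂ = 0 → θ₁ = θ₂ := by
  have hφ1 : 0 < 1 - φ := by linarith [hφ.2]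
  have hβpos : 0 < β := by rw [hβ]; positivity
  set C : ℝ := y - z - β * s * τ - β * (r + s) * h / (1 - φ) with hC
  set K : ℝ := c / (1 - φ) with hK
  set M : ℝ := φ * h - (1 - φ) * ℓ with hM
  have hKpos : 0 < K := div_pos hc hφ1
  have hT' : T = fun x => C - K * ((r + s + φ * (x * q x)) / q x
      + β * (x * q x) / c * M) := by
    funext x
    rw [hT x]
    ring_nf
  set D : ℝ → ℝ := fun x =>
    0 - K * ((φ * (1 * q x + x * q' x) * q x - (r + s + φ * (x * q x)) * q' x) / q x ^ 2
      + β * (1 * q x + x * q' x) / c * M) with hD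
  have hderiv : ∀ x ∈ Set.Ioo 0 θbar, HasDerivAt T (D x) x := by
    intro x hx
    have hq := hq_deriv x hx
    have hqx := hq_pos x hx
    have hqne : q x ≠ 0 := ne_of_gt hqx
    have hu : HasDerivAt (fun x => x * q x) (1 * q x + x * q' x) x :=
      (hasDerivAt_id x).mul hq
    have hn : HasDerivAt (fun x => r + s + φ * (x * q x))
        (0 + φ * (1 * q x + x * q' x)) x :=
      (hasDerivAt_const x (r + s)).add (hu.const_mul φ)
    have hf : HasDerivAt (fun x => (r + s + φ * (x * q x)) / q x)
        (((0 + φ * (1 * q x + x * q' x)) * q x - (r + s + φ * (x * q x)) * q' x) / q x ^ 2)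
        x := hn.div hq hqne
    have hg : HasDerivAt (fun x => β * (x * q x) / c * M)
        (β * (1 * q x + x * q' x) / c * M) x :=
      ((hu.const_mul β).div_const c).mul_const M
    have := ((hasDerivAt_const x C).sub ((hf.add hg).const_mul K))
    rw [hT']
    refine this.congr_deriv ?_
    rw [hD]
    ring
  have hDneg : ∀ x ∈ Set.Ioo 0 θbar, D x < 0 := by
    intro x hx
    have hqx := hq_pos x hx
    have hq'x := hq'_neg x hx
    have hsl := h_slope x hx
    have hA : 0 < -((r + s) * q' x) / q x ^ 2 := by
      apply div_pos
      · nlinarith [hs.1]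
      · positivity
    have hB : 0 < φ + β * (q x + x * q' x) * M / c := by
      have : 0 < (c * φ + β * (q x + x * q' x) * M) / c := div_pos hsl hc
      have heq : (c * φ + β * (q x + x * q' x) * M) / c
          = φ + β * (q x + x * q' x) * M / c := by
        field_simp
      linarith [heq ▸ this]
    have hE : (φ * (1 * q x + x * q' x) * q x - (r + s + φ * (x * q x)) * q' x) / q x ^ 2
        + β * (1 * q x + x * q' x) / c * M
        = -((r + s) * q' x) / q x ^ 2 + (φ + β * (q x + x * q' x) * M / c) := by
      field_simp
      ring
    have hEpos : 0 < (φ * (1 * q x + x * q' x) * q x - (r + s + φ * (x * q x)) * q' x) / q x ^ 2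
        + β * (1 * q x + x * q' x) / c * M := by
      rw [hE]; linarith
    rw [hD]
    simp only
    nlinarith
  have hanti : StrictAntiOn T (Set.Ioo 0 θbar) := by
    apply strictAntiOn_of_deriv_neg (convex_Ioo 0 θbar)
    · intro x hx
      exact (hderiv x hx).continuousAt.continuousWithinAt
    · intro x hx
      rw [interior_Ioo] at hx
      rw [(hderiv x hx).deriv]
      exact hDneg x hx
  refine ⟨hanti, ?_⟩
  intro θ₁ h1 θ₂ h2 hT1 hT2
  exact hanti.injOn h1 h2 (by rw [hT1, hT2])
end

section
/- Fundamental decomposition of the elasticity of market tightness with respect to productivity: let θ₀ := θ(p₀) > 0, suppose q is differentiable at θ₀ with q(θ₀) > 0, θ is differentiable at p₀, F(θ(p), p) = 0 for all p in a neighborhood of p₀, the fundamental surplus Y := p₀ − z − β·s·τ − β·(r+s)·h/(1−φ) is nonzero, and B ≠ 0, where η := −θ₀·q′(θ₀)/q(θ₀), K := (φ·h − (1−φ)·ℓ)/c, A := r + s + θ₀·q(θ₀)·(φ + β·q(θ₀)·K), and B := (r+s)·η + θ₀·q(θ₀)·(φ + β·(1−η)·q(θ₀)·K). Then the elasticity of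 tightness with respect to productivity satisfies θ′(p₀)·p₀/θ₀ = (A/B)·(p₀/Y). -/
/-- Fundamental decomposition of the elasticity of market tightness with respect to
productivity: `θ′(p₀)·p₀/θ₀ = (A/B)·(p₀/Y)`. -/
theorem fundamental_decomposition
    (r s φ c h ℓ z τ β : ℝ) (q θ : ℝ → ℝ) (p₀ θ₀ q'θ₀ θ' : ℝ)
    (hr : 0 < r) (hs : s ∈ Set.Ioo (0 : ℝ) 1) (hφ : φ ∈ Set.Ioo (0 : ℝ) 1)
    (hc : 0 < c) (hh : 0 ≤ h) (hℓ : 0 ≤ ℓ)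
    (hβ : β = 1 / (1 + r))
    (F : ℝ → ℝ → ℝ)
    (hF : ∀ x p, F x p = ((1 - φ) / c) * (p - z - β * s * τ - β * (r + s) * h / (1 - φ)) -
      (r + s) / q x - φ * x - (x * q x / (1 + r)) * ((φ * h - (1 - φ) * ℓ) / c))
    (hθ₀ : θ₀ = θ p₀) (hθ₀_pos : 0 < θ₀)
    (hq_deriv : HasDerivAt q q'θ₀ θ₀) (hq_pos : 0 < q θ₀)
    (hθ_deriv : HasDerivAt θ θ' p₀)
    (h_eq : ∀ᶠ p in nhds p₀, F (θ p) p = 0)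
    (Y : ℝ) (hY : Y = p₀ - z - β * s * τ - β * (r + s) * h / (1 - φ)) (hY_ne : Y ≠ 0)
    (η K A B : ℝ)
    (hη : η = -θ₀ * q'θ₀ / q θ₀)
    (hK : K = (φ * h - (1 - φ) * ℓ) / c)
    (hA : A = r + s + θ₀ * q θ₀ * (φ + β * q θ₀ * K))
    (hB : B = (r + s) * η + θ₀ * q θ₀ * (φ + β * (1 - η) * q θ₀ * K))
    (hB_ne : B ≠ 0) :
    θ' * p₀ / θ₀ = (A / B) * (p₀ / Y) := by
  set Q : ℝ := q θ₀ with hQ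
  have hQ_ne : Q ≠ 0 := ne_of_gt hq_pos
  have hθ₀_ne : θ₀ ≠ 0 := ne_of_gt hθ₀_pos
  have hc_ne : c ≠ 0 := ne_of_gt hc
  have hr1 : (1 : ℝ) + r ≠ 0 := by positivity
  -- value equation at p₀
  have eq0 : ((1 - φ) / c) * Y - (r + s) / Q - φ * θ₀ -
      (θ₀ * Q / (1 + r)) * ((φ * h - (1 - φ) * ℓ) / c) = 0 := by
    have := h_eq.self_of_nhds
    rw [hF] at this
    rw [hY, ← hθ₀] at *
    linarith [this]
  -- derivative of q ∘ θ
  have hq_deriv' : HasDerivAt q q'θ₀ (θ p₀) := hθ₀ ▸ hq_deriv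
  have hqθ : HasDerivAt (fun p => q (θ p)) (q'θ₀ * θ') p₀ := hq_deriv'.comp p₀ hθ_deriv
  have hqθp_ne : q (θ p₀) ≠ 0 := by rw [← hθ₀]; exact hQ_ne
  -- derivative of the composite G p = F (θ p) p
  have h1 : HasDerivAt (fun p : ℝ => ((1 - φ) / c) *
      (p - z - β * s * τ - β * (r + s) * h / (1 - φ))) ((1 - φ) / c * 1) p₀ :=
    ((((hasDerivAt_id p₀).sub_const z).sub_const (β * s * τ)).sub_const
      (β * (r + s) * h / (1 - φ))).const_mul _
  have h2 : HasDerivAt (fun p : ℝ => (r + s) / q (θ p))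
      ((0 * q (θ p₀) - (r + s) * (q'θ₀ * θ')) / (q (θ p₀)) ^ 2) p₀ :=
    (hasDerivAt_const p₀ (r + s)).div hqθ hqθp_ne
  have h3 : HasDerivAt (fun p : ℝ => φ * θ p) (φ * θ') p₀ := hθ_deriv.const_mul φ
  have h4 : HasDerivAt (fun p : ℝ => (θ p * q (θ p) / (1 + r)) * ((φ * h - (1 - φ) * ℓ) / c))
      ((θ' * q (θ p₀) + θ p₀ * (q'θ₀ * θ')) / (1 + r) * ((φ * h - (1 - φ) * ℓ) / c)) p₀ :=
    (((hθ_deriv.mul hqθ).div_const (1 + r)).mul_const _)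
  have hG : HasDerivAt (fun p : ℝ => F (θ p) p)
      ((1 - φ) / c * 1 - (0 * q (θ p₀) - (r + s) * (q'θ₀ * θ')) / (q (θ p₀)) ^ 2 - φ * θ' -
        (θ' * q (θ p₀) + θ p₀ * (q'θ₀ * θ')) / (1 + r) * ((φ * h - (1 - φ) * ℓ) / c)) p₀ := by
    have := ((h1.sub h2).sub h3).sub h4
    refine this.congr_of_eventuallyEq ?_
    filter_upwards with p
    rw [hF]; rfl
  have hG0 : HasDerivAt (fun p : ℝ => F (θ p) p) 0 p₀ :=
    (hasDerivAt_const p₀ (0 : ℝ)).congr_of_eventuallyEq h_eq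
  have eqd : (1 - φ) / c * 1 - (0 * Q - (r + s) * (q'θ₀ * θ')) / Q ^ 2 - φ * θ' -
      (θ' * Q + θ₀ * (q'θ₀ * θ')) / (1 + r) * ((φ * h - (1 - φ) * ℓ) / c) = 0 := by
    have := hG.unique hG0
    rw [← hθ₀] at this
    linarith [this]
  -- algebra
  have hβr : β * (1 + r) = 1 := by rw [hβ]; field_simp
  have hKc : K * c = φ * h - (1 - φ) * ℓ := by rw [hK]; field_simp
  -- A relation: c * A = (1-φ) * Y * Q
  have hArel : c * A = (1 - φ) * Y * Q := by
    have e0 : ((1 - φ) / c) * Y = (r + s) / Q + φ * θ₀ +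
        (θ₀ * Q / (1 + r)) * ((φ * h - (1 - φ) * ℓ) / c) := by linarith [eq0]
    rw [hA]
    field_simp at e0 ⊢
    have hrc : ((1 + r) * c) ≠ 0 := by positivity
    refine mul_right_cancel₀ hrc ?_
    linear_combination (-c) * e0 + c ^ 2 * θ₀ * Q ^ 2 * K * hβr + c * θ₀ * Q ^ 2 * hKc
  -- B relation: c * θ' * B = (1-φ) * θ₀ * Q
  have hBrel : c * θ' * B = (1 - φ) * θ₀ * Q := by
    rw [hB, hη]
    field_simp at eqd ⊢
    have hrc : ((1 + r) * c) ≠ 0 := by positivity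
    refine mul_right_cancel₀ hrc ?_
    linear_combination (-c) * eqd + c ^ 2 * θ' * Q ^ 2 * (Q + θ₀ * q'θ₀) * K * hβr +
      c * θ' * Q ^ 2 * (Q + θ₀ * q'θ₀) * hKc
  have key : θ' * B * Y = θ₀ * A := by
    have h1 : c * (θ' * B * Y) = c * (θ₀ * A) := by
      linear_combination Y * hBrel - θ₀ * hArel
    exact mul_left_cancel₀ hc_ne h1
  field_simp
  linear_combination p₀ * key
end

section
/- The workers' job-creation (Nash-bargained wage) condition: suppose J = y − w + β·(s·(0 − τ) + (1−s)·J), c = β·q₀·(J − h), E = w + β·(s·U + (1−s)·E), U = z + β·(f₀·(E − ℓ) + (1 − f₀)·U), f₀ = θ·q₀, and the Nash sharing rule (1−φ)·(E − U) = φ·J. Then w = z + φ·(y − z − β·s·τ + θ·c) + (f₀/(1+r))·(φ·h − (1−φ)·ℓ). -/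
/-- The workers' job-creation (Nash-bargained wage) condition. -/
theorem workers_job_creation_condition
    (r s φ β θ q₀ f₀ y z w τ c h ℓ J E U : ℝ)
    (hr : 0 < r) (hs : s ∈ Set.Ioo (0 : ℝ) 1) (hφ : φ ∈ Set.Ioo (0 : ℝ) 1)
    (hβ : β = 1 / (1 + r)) (hθ : 0 < θ) (hq₀ : 0 < q₀)
    (hJ : J = y - w + β * (s * (0 - τ) + (1 - s) * J))
    (hV : c = β * q₀ * (J - h))
    (hE : E = w + β * (s * U + (1 - s) * E))
    (hU : U = z + β * (f₀ * (E - ℓ) + (1 - f₀) * U))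
    (hf₀ : f₀ = θ * q₀)
    (hNash : (1 - φ) * (E - U) = φ * J) :
    w = z + φ * (y - z - β * s * τ + θ * c) + (f₀ / (1 + r)) * (φ * h - (1 - φ) * ℓ) := by
  have hr1 : (1 + r) ≠ 0 := by positivity
  have h1φ : (1 : ℝ) - φ ≠ 0 := by
    have := hφ.2; intro h; linarith
  have hfr : f₀ / (1 + r) = β * f₀ := by rw [hβ]; field_simp
  rw [hfr]
  apply mul_left_cancel₀ h1φ
  linear_combination (-(1 - φ)^2) * hE + (1 - φ)^2 * hU
    + (1 - φ) * (1 - β * (1 - s) + β * f₀) * hNash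
    + (1 - φ) * φ * hJ - (1 - φ) * φ * θ * hV
    + (1 - φ) * φ * β * (J - h) * hf₀
end
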